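/- Let N ≥ 2 and let t_1⋯t_p ∈ {0,...,N-1}^p be an admissible block. Then the periodic sequence (t_1⋯t_p)^∞ is shift-maximal, i.e., for every 1 ≤ i ≤ p, the cyclically shifted sequence t_i⋯t_p(t_1⋯t_p)^∞ is lexicographically ≤ (t_1⋯t_p)^∞. -/

import Mathlib

/-- Reflection of a block: each digit `c` becomes `N - 1 - c`. -/
def reflB (N : ℕ) (w : List ℕ) : List ℕ := w.map (fun c => N - 1 - c)

/-- The block `w` with its last digit incremented by one. -/
def plusB (w : List ℕ) : List ℕ := w.dropLast ++ [w.getLast! + 1]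

/-- The `i`-th cyclic rotation of the block `w` (0-indexed). -/
def rotB (w : List ℕ) (i : ℕ) : List ℕ := w.drop i ++ w.take i

/-- The lexicographic inequalities defining admissibility of a block. -/
def AdmissibleIneq (N : ℕ) (w : List ℕ) : Prop :=
  ∀ i < w.length,
    reflB N w ≤ rotB w i ∧ plusB (w.drop i) ++ reflB N (w.take i) ≤ plusB w

/-- An admissible block in `{0, …, N-1}`. -/
def Admissible (N : ℕ) (w : List ℕ) : Prop :=
  w ≠ [] ∧ (∀ c ∈ w, c < N) ∧ w.getLast! < N - 1 ∧ AdmissibleIneq N w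

/-- Prefixes of the generalized Thue–Morse sequence generated by `plusB w`:
`gtmBlock N w n` is the prefix `θ_1 ⋯ θ_{2^n p}`. -/
def gtmBlock (N : ℕ) (w : List ℕ) : ℕ → List ℕ
  | 0 => plusB w
  | n + 1 => gtmBlock N w n ++ plusB (reflB N (gtmBlock N w n))

/-- The generalized Thue–Morse sequence generated by `plusB w`, 0-indexed:
`gtm N w n = θ_{n+1}`. -/
def gtm (N : ℕ) (w : List ℕ) : ℕ → ℕ := fun n => (gtmBlock N w n).getD n 0

/-- Strict lexicographic order on infinite sequences of digits. -/
def seqLt (a b : ℕ → ℕ) : Prop := ∃ n, (∀ k < n, a k = b k) ∧ a n < b n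

/-- Lexicographic order on infinite sequences of digits. -/
def seqLe (a b : ℕ → ℕ) : Prop := seqLt a b ∨ a = b

/-- Shift of a sequence by `k` places. -/
def shift (a : ℕ → ℕ) (k : ℕ) : ℕ → ℕ := fun n => a (n + k)

/-- The periodic sequence `w^∞` obtained by repeating the block `w`. -/
def per (w : List ℕ) : ℕ → ℕ := fun n => w.getD (n % w.length) 0

/-- Reflection of an infinite sequence. -/
def reflSeq (N : ℕ) (a : ℕ → ℕ) : ℕ → ℕ := fun n => N - 1 - a n

/-- The classical Thue–Morse sequence: parity of the binary digit sum. -/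
def tm (i : ℕ) : ℕ := (Nat.digits 2 i).sum % 2

/-- Number of length-`n` words appearing in sequences of `Z`. -/
noncomputable def wordCount (Z : Set (ℕ → ℕ)) (n : ℕ) : ℕ :=
  Set.ncard { u : List ℕ | u.length = n ∧ ∃ d ∈ Z, ∀ k < n, u.getD k 0 = d k }

/-- `Z` has topological entropy `h`. -/
def hasEntropy (Z : Set (ℕ → ℕ)) (h : ℝ) : Prop :=
  Filter.Tendsto (fun n : ℕ => Real.log (wordCount Z n) / n) Filter.atTop (nhds h)

section StmtOneAux

lemma lexChar {a b : List ℕ} (h : List.Lex (· < ·) a b) (hl : a.length = b.length) :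
    ∃ n < b.length, (∀ k < n, a.getD k 0 = b.getD k 0) ∧ a.getD n 0 < b.getD n 0 := by
  induction h with
  | nil => simp at hl
  | @cons x l₁ l₂ h ih =>
      obtain ⟨n, hn, hag, hst⟩ := ih (by simpa using hl)
      refine ⟨n + 1, by simpa using hn, ?_, by simpa using hst⟩
      intro k hk
      cases k with
      | zero => simp
      | succ k => simpa using hag k (by omega)
  | @rel x l₁ y l₂ h =>
      exact ⟨0, by simp, fun k hk => absurd hk (Nat.not_lt_zero k), by simpa using h⟩

lemma getLast!_eq_getD' {v : List ℕ} (hv : v ≠ []) :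
    v.getLast! = v.getD (v.length - 1) 0 := by
  have hp : 0 < v.length := List.length_pos_iff.mpr hv
  rw [List.getD_eq_getElem _ _ (by omega),
    List.getLast!_of_getLast? (List.getLast?_eq_getLast hv),
    List.getLast_eq_getElem]

lemma plusB_length' {v : List ℕ} (hv : v ≠ []) : (plusB v).length = v.length := by
  have := List.length_pos_iff.mpr hv
  simp only [plusB, List.length_append, List.length_dropLast, List.length_cons,
    List.length_nil]
  omega

lemma plusB_getD_lt {v : List ℕ} {k : ℕ} (hk : k < v.length - 1) :
    (plusB v).getD k 0 = v.getD k 0 := by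
  unfold plusB
  rw [List.getD_append _ _ _ _ (by simp [List.length_dropLast]; omega)]
  rw [List.getD_eq_getElem _ _ (by simp [List.length_dropLast]; omega),
    List.getElem_dropLast, List.getD_eq_getElem _ _ (by omega)]

lemma plusB_getD_last {v : List ℕ} (hv : v ≠ []) :
    (plusB v).getD (v.length - 1) 0 = v.getD (v.length - 1) 0 + 1 := by
  have hp : 0 < v.length := List.length_pos_iff.mpr hv
  unfold plusB
  rw [List.getD_append_right _ _ _ _ (by simp [List.length_dropLast])]
  simp [List.length_dropLast, getLast!_eq_getD' hv, List.getLast?_eq_getElem?]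

lemma drop_getD {v : List ℕ} {i j : ℕ} (h : i + j < v.length) :
    (v.drop i).getD j 0 = v.getD (i + j) 0 := by
  rw [List.getD_eq_getElem _ _ (by simp; omega), List.getElem_drop,
    List.getD_eq_getElem _ _ (by omega)]

end StmtOneAux

/-- if `t_1⋯t_p` is admissible then `(t_1⋯t_p)^∞` is shift-maximal:
every cyclic shift `t_i⋯t_p(t_1⋯t_p)^∞ = (t_i⋯t_p t_1⋯t_{i-1})^∞` is `≤ (t_1⋯t_p)^∞`. -/
theorem stmt1 (N : ℕ) (hN : 2 ≤ N) (w : List ℕ) (hadm : Admissible N w) :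
    ∀ i < w.length, seqLe (per (rotB w i)) (per w) := by
  intro i hi
  obtain ⟨hne, hdig, hlast, hineq⟩ := hadm
  have hp : 0 < w.length := List.length_pos_iff.mpr hne
  rcases Nat.eq_zero_or_pos i with hi0 | hi0
  · subst hi0
    exact Or.inr (by simp [rotB])
  -- main case: 0 < i < p
  set p := w.length with hpdef
  have hdlen : (w.drop i).length = p - i := by simp [hpdef]
  have hdne : w.drop i ≠ [] := by
    intro hcon
    rw [hcon] at hdlen
    simp at hdlen; omega
  set A := plusB (w.drop i) ++ reflB N (w.take i) with hA
  set B := plusB w with hB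
  have hAlen : A.length = p := by
    rw [hA, List.length_append, plusB_length' hdne, hdlen]
    simp [reflB]
    omega
  have hBlen : B.length = p := plusB_length' hne
  have hBgetD : ∀ k < p - 1, B.getD k 0 = w.getD k 0 := fun k hk => plusB_getD_lt hk
  have hAgetD : ∀ k < p - i - 1, A.getD k 0 = w.getD (i + k) 0 := by
    intro k hk
    rw [hA, List.getD_append _ _ _ _ (by rw [plusB_length' hdne, hdlen]; omega),
      plusB_getD_lt (by rw [hdlen]; omega), drop_getD (by omega)]
  have hAcrit : A.getD (p - i - 1) 0 = w.getD (p - 1) 0 + 1 := by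
    rw [hA, List.getD_append _ _ _ _ (by rw [plusB_length' hdne, hdlen]; omega)]
    have h1 : (plusB (w.drop i)).getD ((w.drop i).length - 1) 0
        = (w.drop i).getD ((w.drop i).length - 1) 0 + 1 := plusB_getD_last hdne
    rw [hdlen] at h1
    rw [h1, drop_getD (by omega)]
    congr 2
    omega
  have hperW : ∀ n < p, per w n = w.getD n 0 := by
    intro n hn
    simp only [per, hpdef]
    rw [Nat.mod_eq_of_lt hn]
  have hrotlen : (rotB w i).length = p := by simp [rotB]; omega
  have hperR : ∀ n < p - i, per (rotB w i) n = w.getD (i + n) 0 := by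
    intro n hn
    simp only [per, hrotlen]
    rw [Nat.mod_eq_of_lt (by omega), rotB,
      List.getD_append _ _ _ _ (by simp; omega), drop_getD (by omega)]
  have hAB : A ≤ B := (hineq i hi).2
  have key : (∃ n < p - i - 1, (∀ k < n, A.getD k 0 = B.getD k 0) ∧ A.getD n 0 < B.getD n 0)
      ∨ ((∀ k < p - i - 1, A.getD k 0 = B.getD k 0)
          ∧ A.getD (p - i - 1) 0 ≤ B.getD (p - i - 1) 0) := by
    rcases lt_or_eq_of_le hAB with hlt | heq
    · have hlex : List.Lex (· < ·) A B := hlt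
      obtain ⟨n, hn, hag, hst⟩ := lexChar hlex (by rw [hAlen, hBlen])
      rcases lt_trichotomy n (p - i - 1) with h | h | h
      · exact Or.inl ⟨n, h, hag, hst⟩
      · exact Or.inr ⟨fun k hk => hag k (by omega), h ▸ le_of_lt hst⟩
      · exact Or.inr ⟨fun k hk => hag k (by omega), le_of_eq (hag _ (by omega))⟩
    · exact Or.inr ⟨fun k _ => by rw [heq], le_of_eq (by rw [heq])⟩
  rcases key with ⟨n, hn, hag, hst⟩ | ⟨hag, hle⟩
  · refine Or.inl ⟨n, fun k hk => ?_, ?_⟩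
    · rw [hperR k (by omega), hperW k (by omega), ← hAgetD k (by omega), hag k hk,
        hBgetD k (by omega)]
    · rw [hperR n (by omega), hperW n (by omega), ← hAgetD n (by omega),
        ← hBgetD n (by omega)]
      exact hst
  · refine Or.inl ⟨p - i - 1, fun k hk => ?_, ?_⟩
    · rw [hperR k (by omega), hperW k (by omega), ← hAgetD k (by omega), hag k hk,
        hBgetD k (by omega)]
    · rw [hperR (p - i - 1) (by omega), hperW (p - i - 1) (by omega)]
      rw [hAcrit, hBgetD (p - i - 1) (by omega)] at hle
      have : i + (p - i - 1) = p - 1 := by omega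
      rw [this]
      omega
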